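/- Combining the stability bound and Hoeffding's inequality: under the above assumptions, with probability at least 1 - exp(-2 N_r ε²/(τ₂ - τ₁)²), the approximate solution satisfies ‖u(·;Θ_N^{*,(k)}) - u‖_{2,Ω} ≤ √2 C₁^{-1} (R_k + ε + ‖b(·;Θ_N^{*,(k)})‖²_{2,∂Ω})^{1/2}. -/

import Mathlib

open MeasureTheory ProbabilityTheory
open Real

lemma das_aux_key (p : ℝ) (hp0 : 0 ≤ p) (hp1 : p ≤ 1) (h : ℝ) :
    1 - p + p * exp h ≤ exp (p * h + h ^ 2 / 8) := by
  -- positivity of D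
  have hD : ∀ x : ℝ, 0 < 1 - p + p * exp x := by
    intro x
    rcases eq_or_lt_of_le hp0 with hp | hp
    · simp [← hp]
    · have := exp_pos x
      nlinarith
  set g : ℝ → ℝ := fun x => p * x + x ^ 2 / 8 - Real.log (1 - p + p * exp x) with hg
  set g' : ℝ → ℝ := fun x => p + x / 4 - p * exp x / (1 - p + p * exp x) with hg'
  have hDeriv : ∀ x : ℝ, HasDerivAt (fun y => 1 - p + p * exp y) (p * exp x) x := by
    intro x
    simpa using ((Real.hasDerivAt_exp x).const_mul p).const_add (1 - p)
  have hgd : ∀ x : ℝ, HasDerivAt g (g' x) x := by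
    intro x
    have h1 : HasDerivAt (fun y : ℝ => p * y + y ^ 2 / 8) (p + 2 * x / 8) x := by
      have := ((hasDerivAt_id x).const_mul p).add
        (((hasDerivAt_pow 2 x)).div_const 8)
      simpa [Pi.add_def] using this
    have h2 : HasDerivAt (fun y : ℝ => Real.log (1 - p + p * exp y))
        (p * exp x / (1 - p + p * exp x)) x := (hDeriv x).log (hD x).ne'
    have := h1.fun_sub h2
    refine this.congr_deriv ?_
    simp [hg']; ring
  have hg'd : ∀ x : ℝ, HasDerivAt g'
      (1 / 4 - p * exp x * (1 - p) / (1 - p + p * exp x) ^ 2) x := by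
    intro x
    have h1 : HasDerivAt (fun y : ℝ => p + y / 4) (1 / 4) x := by
      simpa using ((hasDerivAt_id x).div_const 4).const_add p
    have h2 : HasDerivAt (fun y : ℝ => p * exp y / (1 - p + p * exp y))
        ((p * exp x * (1 - p + p * exp x) - p * exp x * (p * exp x))
          / (1 - p + p * exp x) ^ 2) x :=
      ((Real.hasDerivAt_exp x).const_mul p).div (hDeriv x) (hD x).ne'
    have := h1.fun_sub h2
    refine this.congr_deriv ?_
    have hDx := (hD x).ne'
    field_simp
    ring
  have hg'' : ∀ x : ℝ, 0 ≤ 1 / 4 - p * exp x * (1 - p) / (1 - p + p * exp x) ^ 2 := by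
    intro x
    have hDx := hD x
    rw [sub_nonneg, div_le_iff₀ (by positivity)]
    nlinarith [exp_pos x, sq_nonneg (1 - p - p * exp x)]
  have hg'mono : Monotone g' := by
    apply monotone_of_deriv_nonneg
    · exact fun x => (hg'd x).differentiableAt
    · intro x
      rw [(hg'd x).deriv]
      exact hg'' x
  have hg'0 : g' 0 = 0 := by
    simp [hg']
  have hg0 : g 0 = 0 := by
    simp [hg]
  have key : ∀ x : ℝ, 0 ≤ g x := by
    intro x
    rcases lt_trichotomy x 0 with hx | hx | hx
    · obtain ⟨c, hc, hc'⟩ := exists_hasDerivAt_eq_slope g g' hx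
        (fun y _ => (hgd y).differentiableAt.continuousAt.continuousWithinAt)
        (fun y _ => hgd y)
      have hcle : g' c ≤ 0 := hg'0 ▸ hg'mono hc.2.le
      have : (g 0 - g x) / (0 - x) ≤ 0 := hc' ▸ hcle
      rw [hg0] at this
      rcases div_nonpos_iff.mp this with ⟨h1, h2⟩ | ⟨h1, h2⟩ <;> linarith
    · simp [hx, hg0]
    · obtain ⟨c, hc, hc'⟩ := exists_hasDerivAt_eq_slope g g' hx
        (fun y _ => (hgd y).differentiableAt.continuousAt.continuousWithinAt)
        (fun y _ => hgd y)
      have hcge : 0 ≤ g' c := hg'0 ▸ hg'mono hc.1.le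
      have : 0 ≤ (g x - g 0) / (x - 0) := hc' ▸ hcge
      rw [hg0] at this
      rcases div_nonneg_iff.mp this with ⟨h1, h2⟩ | ⟨h1, h2⟩ <;> linarith
  have := key h
  have hlog : Real.log (1 - p + p * exp h) ≤ p * h + h ^ 2 / 8 := by
    simp only [hg] at this; linarith
  calc 1 - p + p * exp h = exp (Real.log (1 - p + p * exp h)) := (exp_log (hD h)).symm
    _ ≤ exp (p * h + h ^ 2 / 8) := exp_le_exp.mpr hlog

lemma das_integrable_of_Icc {Ω : Type*} [MeasurableSpace Ω] (P : Measure Ω)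
    [IsProbabilityMeasure P] (X : Ω → ℝ) (hX : Measurable X) (a b : ℝ)
    (hbd : ∀ᵐ ω ∂P, X ω ∈ Set.Icc a b) : Integrable X P := by
  refine Integrable.mono' (integrable_const (max |a| |b|)) hX.aestronglyMeasurable ?_
  filter_upwards [hbd] with ω hω
  rw [Real.norm_eq_abs]
  exact abs_le_max_abs_abs hω.1 hω.2

lemma das_hoeffding_mgf {Ω : Type*} [MeasurableSpace Ω] (P : Measure Ω)
    [IsProbabilityMeasure P] (X : Ω → ℝ) (hX : Measurable X) (a b : ℝ) (hab : a ≤ b)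
    (hbd : ∀ᵐ ω ∂P, X ω ∈ Set.Icc a b) (t : ℝ) :
    mgf X P t ≤ exp (t * (∫ ω, X ω ∂P) + t ^ 2 * (b - a) ^ 2 / 8) := by
  have hint : Integrable X P := das_integrable_of_Icc P X hX a b hbd
  set m := ∫ ω, X ω ∂P with hm
  have hma : a ≤ m := by
    have : ∫ _ω, a ∂P ≤ ∫ ω, X ω ∂P :=
      integral_mono_ae (integrable_const a) hint (by filter_upwards [hbd] with ω hω using hω.1)
    simpa using this
  have hmb : m ≤ b := by
    have : ∫ ω, X ω ∂P ≤ ∫ _ω, b ∂P :=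
      integral_mono_ae hint (integrable_const b) (by filter_upwards [hbd] with ω hω using hω.2)
    simpa using this
  rcases eq_or_lt_of_le hab with heq | hlt
  · -- a = b : X = a a.e.
    subst heq
    have hXa : ∀ᵐ ω ∂P, X ω = a := by
      filter_upwards [hbd] with ω hω
      exact le_antisymm hω.2 hω.1
    have hmgf : mgf X P t = exp (t * a) := by
      rw [mgf]
      rw [integral_congr_ae (g := fun _ => exp (t * a))
        (by filter_upwards [hXa] with ω hω; rw [hω])]
      simp
    have hmeq : m = a := by
      rw [hm, integral_congr_ae (g := fun _ => a) hXa]; simp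
    rw [hmgf, hmeq]
    simp
  · have hba : (0:ℝ) < b - a := by linarith
    set c : ℝ := (b * exp (t * a) - a * exp (t * b)) / (b - a) with hc
    set d : ℝ := (exp (t * b) - exp (t * a)) / (b - a) with hd
    have hpt : ∀ᵐ ω ∂P, exp (t * X ω) ≤ c + d * X ω := by
      filter_upwards [hbd] with ω hω
      set x := X ω
      have h1 : (0:ℝ) ≤ (b - x) / (b - a) := div_nonneg (by linarith [hω.2]) hba.le
      have h2 : (0:ℝ) ≤ (x - a) / (b - a) := div_nonneg (by linarith [hω.1]) hba.le
      have h3 : (b - x) / (b - a) + (x - a) / (b - a) = 1 := by field_simp; ring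
      have := convexOn_exp.2 (Set.mem_univ (t * a)) (Set.mem_univ (t * b)) h1 h2 h3
      have harg : (b - x) / (b - a) * (t * a) + (x - a) / (b - a) * (t * b) = t * x := by
        field_simp; ring
      simp only [smul_eq_mul] at this
      rw [harg] at this
      refine this.trans (le_of_eq ?_)
      rw [hc, hd]; field_simp; ring
    have hintexp : Integrable (fun ω => exp (t * X ω)) P := by
      refine Integrable.mono' (integrable_const (max (exp (t * a)) (exp (t * b))))
        ((hX.const_mul t).exp).aestronglyMeasurable ?_
      filter_upwards [hbd] with ω hω
      rw [Real.norm_eq_abs, abs_of_pos (exp_pos _)]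
      rcases le_or_gt 0 t with ht | ht
      · exact le_max_of_le_right (exp_le_exp.mpr (by nlinarith [hω.2]))
      · exact le_max_of_le_left (exp_le_exp.mpr (by nlinarith [hω.1]))
    have hintrhs : Integrable (fun ω => c + d * X ω) P :=
      (integrable_const c).add (hint.const_mul d)
    have hstep : mgf X P t ≤ c + d * m := by
      rw [mgf]
      calc ∫ ω, exp (t * X ω) ∂P ≤ ∫ ω, (c + d * X ω) ∂P :=
            integral_mono_ae hintexp hintrhs hpt
        _ = c + d * m := by
            rw [integral_add (integrable_const c) (hint.const_mul d),
              integral_const_mul, integral_const]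
            simp [hm]
    set p : ℝ := (m - a) / (b - a) with hp
    have hp0 : 0 ≤ p := div_nonneg (by linarith) hba.le
    have hp1 : p ≤ 1 := by
      rw [hp, div_le_one hba]; linarith
    have key := das_aux_key p hp0 hp1 (t * (b - a))
    have hcdm : c + d * m = exp (t * a) * (1 - p + p * exp (t * (b - a))) := by
      rw [hc, hd, hp, show t * b = t * a + t * (b - a) by ring, exp_add]
      field_simp
      ring
    have hfin : exp (t * a) * exp (p * (t * (b - a)) + (t * (b - a)) ^ 2 / 8)
        = exp (t * m + t ^ 2 * (b - a) ^ 2 / 8) := by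
      rw [← exp_add]
      congr 1
      rw [hp]
      field_simp
      ring
    calc mgf X P t ≤ c + d * m := hstep
      _ = exp (t * a) * (1 - p + p * exp (t * (b - a))) := hcdm
      _ ≤ exp (t * a) * exp (p * (t * (b - a)) + (t * (b - a)) ^ 2 / 8) := by
          exact mul_le_mul_of_nonneg_left key (exp_pos _).le
      _ = exp (t * m + t ^ 2 * (b - a) ^ 2 / 8) := hfin

lemma das_integrable_exp_of_Icc {Ω : Type*} [MeasurableSpace Ω] (P : Measure Ω)
    [IsProbabilityMeasure P] (X : Ω → ℝ) (hX : Measurable X) (a b : ℝ)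
    (hbd : ∀ᵐ ω ∂P, X ω ∈ Set.Icc a b) (t : ℝ) :
    Integrable (fun ω => exp (t * X ω)) P := by
  refine Integrable.mono' (integrable_const (max (exp (t * a)) (exp (t * b))))
    ((hX.const_mul t).exp).aestronglyMeasurable ?_
  filter_upwards [hbd] with ω hω
  rw [Real.norm_eq_abs, abs_of_pos (exp_pos _)]
  rcases le_or_gt 0 t with ht | ht
  · exact le_max_of_le_right (exp_le_exp.mpr (by nlinarith [hω.2]))
  · exact le_max_of_le_left (exp_le_exp.mpr (by nlinarith [hω.1]))

/-- Theorem 1: combining the stability bound with Hoeffding's inequality, with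
probability at least `1 - exp(-2 N_r ε²/(τ₂ - τ₁)²)` the approximate solution satisfies
`‖u_Θ - u‖ ≤ √2 C₁⁻¹ (R_k + ε + ‖b‖²)^{1/2}`. -/
theorem das_error_bound
    {H V W Ω' : Type*} [NormedAddCommGroup H] [NormedSpace ℝ H]
    [NormedAddCommGroup V] [NormedAddCommGroup W]
    [NormedSpace ℝ V] [NormedSpace ℝ W] [MeasurableSpace Ω']
    (L : H →ₗ[ℝ] V) (B : H →ₗ[ℝ] W)
    (C₁ : ℝ) (hC₁ : 0 < C₁)
    (hstab : ∀ v : H, C₁ * ‖v‖ ≤ ‖L v‖ + ‖B v‖)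
    (u uΘ : H) (s : V) (g : W) (hu : L u = s) (hg : B u = g)
    (P : Measure Ω') [IsProbabilityMeasure P]
    (Nr : ℕ) (hNr : 0 < Nr) (Y : Fin Nr → Ω' → ℝ)
    (hmeas : ∀ i, Measurable (Y i))
    (hindep : iIndepFun Y P)
    (hident : ∀ i j, Measure.map (Y i) P = Measure.map (Y j) P)
    (τ₁ τ₂ : ℝ) (hτ : τ₁ < τ₂)
    (hbound : ∀ i, ∀ᵐ ω ∂P, Y i ω ∈ Set.Icc τ₁ τ₂)
    (Rk : Ω' → ℝ) (hRk : Rk = fun ω => (1 / (Nr : ℝ)) * ∑ i, Y i ω)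
    (hERk : ∫ ω, Rk ω ∂P = ‖L uΘ - s‖ ^ 2)
    (ε : ℝ) (hε : 0 < ε) (hε1 : ε < 1) :
    1 - Real.exp (-2 * Nr * ε ^ 2 / (τ₂ - τ₁) ^ 2)
      ≤ (P {ω | ‖uΘ - u‖
            ≤ Real.sqrt 2 * C₁⁻¹
                * Real.sqrt (Rk ω + ε + ‖B uΘ - g‖ ^ 2)}).toReal := by
  have hNR : (0:ℝ) < (Nr : ℝ) := Nat.cast_pos.mpr hNr
  have hw : (0:ℝ) < (τ₂ - τ₁) ^ 2 := by
    have : (0:ℝ) < τ₂ - τ₁ := by linarith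
    positivity
  have hintY : ∀ i, Integrable (Y i) P :=
    fun i => das_integrable_of_Icc P (Y i) (hmeas i) τ₁ τ₂ (hbound i)
  -- common mean
  set i0 : Fin Nr := ⟨0, hNr⟩
  set μc : ℝ := ∫ ω, Y i0 ω ∂P with hμc
  have hconst : ∀ i, ∫ ω, Y i ω ∂P = μc := by
    intro i
    have h1 : ∫ x, x ∂(Measure.map (Y i) P) = ∫ ω, Y i ω ∂P :=
      integral_map (hmeas i).aemeasurable aestronglyMeasurable_id
    have h2 : ∫ x, x ∂(Measure.map (Y i0) P) = ∫ ω, Y i0 ω ∂P :=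
      integral_map (hmeas i0).aemeasurable aestronglyMeasurable_id
    rw [hμc, ← h1, hident i i0, h2]
  have hμcval : μc = ‖L uΘ - s‖ ^ 2 := by
    rw [← hERk, hRk]
    rw [integral_const_mul, integral_finset_sum _ (fun i _ => hintY i)]
    simp only [hconst, Finset.sum_const, Finset.card_univ, Fintype.card_fin, nsmul_eq_mul]
    field_simp
  -- centered variables
  set X : Fin Nr → Ω' → ℝ := fun i ω => μc - Y i ω with hX
  have hXmeas : ∀ i, Measurable (X i) := fun i => measurable_const.sub (hmeas i)
  have hXbd : ∀ i, ∀ᵐ ω ∂P, X i ω ∈ Set.Icc (μc - τ₂) (μc - τ₁) := by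
    intro i
    filter_upwards [hbound i] with ω hω
    exact ⟨by simp [hX]; linarith [hω.2], by simp [hX]; linarith [hω.1]⟩
  have hXmean : ∀ i, ∫ ω, X i ω ∂P = 0 := by
    intro i
    rw [hX]
    simp only
    rw [integral_sub (integrable_const μc) (hintY i), integral_const, hconst i]
    simp
  have hXindep : iIndepFun X P := by
    have := hindep.comp (fun _ x => μc - x) (fun _ => measurable_const.sub measurable_id)
    exact this
  set t : ℝ := 4 * ε / (τ₂ - τ₁) ^ 2 with ht
  have htpos : 0 < t := by positivity
  have hXint : ∀ i, Integrable (fun ω => exp (t * X i ω)) P :=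
    fun i => das_integrable_exp_of_Icc P (X i) (hXmeas i) _ _ (hXbd i) t
  -- Chernoff via Hoeffding
  have hmgf_i : ∀ i, mgf (X i) P t ≤ exp (t ^ 2 * (τ₂ - τ₁) ^ 2 / 8) := by
    intro i
    have := das_hoeffding_mgf P (X i) (hXmeas i) (μc - τ₂) (μc - τ₁)
      (by linarith) (hXbd i) t
    rw [hXmean i] at this
    simpa using this
  have hSint : Integrable (fun ω => exp (t * (∑ i, X i) ω)) P :=
    hXindep.integrable_exp_mul_sum hXmeas (fun i _ => hXint i)
  have hchernoff := measure_ge_le_exp_mul_mgf (X := ∑ i, X i) (μ := P)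
    ((Nr : ℝ) * ε) htpos.le hSint
  have hmgfS : mgf (∑ i, X i) P t ≤ exp ((Nr : ℝ) * (t ^ 2 * (τ₂ - τ₁) ^ 2 / 8)) := by
    rw [hXindep.mgf_sum hXmeas]
    calc ∏ i, mgf (X i) P t ≤ ∏ _i : Fin Nr, exp (t ^ 2 * (τ₂ - τ₁) ^ 2 / 8) :=
          Finset.prod_le_prod (fun i _ => mgf_nonneg) (fun i _ => hmgf_i i)
      _ = exp ((Nr : ℝ) * (t ^ 2 * (τ₂ - τ₁) ^ 2 / 8)) := by
          rw [Finset.prod_const, ← Real.exp_nat_mul]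
          simp
  have hbad : (P {ω | (Nr : ℝ) * ε ≤ (∑ i, X i) ω}).toReal
      ≤ exp (-2 * Nr * ε ^ 2 / (τ₂ - τ₁) ^ 2) := by
    refine hchernoff.trans ?_
    calc exp (-t * ((Nr : ℝ) * ε)) * mgf (∑ i, X i) P t
        ≤ exp (-t * ((Nr : ℝ) * ε)) * exp ((Nr : ℝ) * (t ^ 2 * (τ₂ - τ₁) ^ 2 / 8)) :=
          mul_le_mul_of_nonneg_left hmgfS (exp_pos _).le
      _ = exp (-2 * Nr * ε ^ 2 / (τ₂ - τ₁) ^ 2) := by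
          rw [← exp_add]
          congr 1
          rw [ht]
          field_simp
          ring
  -- deterministic inclusion
  have hdet : {ω | (Nr : ℝ) * ε ≤ (∑ i, X i) ω}ᶜ
      ⊆ {ω | ‖uΘ - u‖ ≤ Real.sqrt 2 * C₁⁻¹ * Real.sqrt (Rk ω + ε + ‖B uΘ - g‖ ^ 2)} := by
    intro ω hω
    simp only [Set.mem_compl_iff, Set.mem_setOf_eq, not_le] at hω
    rw [Finset.sum_apply] at hω
    have hsum : ∑ i, X i ω = (Nr : ℝ) * μc - ∑ i, Y i ω := by
      simp [hX, Finset.sum_sub_distrib]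
    have hRkω : μc - ε < Rk ω := by
      rw [hRk]
      simp only
      rw [hsum] at hω
      rw [div_mul_eq_mul_div, lt_div_iff₀ hNR] at *
      nlinarith
    have hq0 : ‖L uΘ - s‖ ^ 2 + ‖B uΘ - g‖ ^ 2 ≤ Rk ω + ε + ‖B uΘ - g‖ ^ 2 := by
      rw [← hμcval]; linarith
    set q : ℝ := Rk ω + ε + ‖B uΘ - g‖ ^ 2 with hq
    have hqnn : 0 ≤ q := le_trans (by positivity) hq0
    have hstab' : C₁ * ‖uΘ - u‖ ≤ ‖L uΘ - s‖ + ‖B uΘ - g‖ := by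
      have := hstab (uΘ - u)
      rwa [map_sub, map_sub, hu, hg] at this
    have hsq : ‖L uΘ - s‖ + ‖B uΘ - g‖ ≤ Real.sqrt 2 * Real.sqrt q := by
      rw [show Real.sqrt 2 * Real.sqrt q = Real.sqrt (2 * q) from
        (Real.sqrt_mul (by norm_num) q).symm, Real.le_sqrt (by positivity) (by linarith)]
      nlinarith [sq_nonneg (‖L uΘ - s‖ - ‖B uΘ - g‖), norm_nonneg (L uΘ - s), norm_nonneg (B uΘ - g)]
    have : ‖uΘ - u‖ = C₁⁻¹ * (C₁ * ‖uΘ - u‖) := by field_simp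
    rw [Set.mem_setOf_eq]
    calc ‖uΘ - u‖ = C₁⁻¹ * (C₁ * ‖uΘ - u‖) := this
      _ ≤ C₁⁻¹ * (Real.sqrt 2 * Real.sqrt q) := by
          exact mul_le_mul_of_nonneg_left (hstab'.trans hsq) (by positivity)
      _ = Real.sqrt 2 * C₁⁻¹ * Real.sqrt q := by ring
  -- measure arithmetic
  have hBadMeas : MeasurableSet {ω | (Nr : ℝ) * ε ≤ (∑ i, X i) ω} := by
    have hm : Measurable fun ω => ∑ i, X i ω := Finset.measurable_sum _ (fun i _ => hXmeas i)
    exact measurableSet_le measurable_const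
      (by show Measurable fun ω => (∑ i, X i) ω; simp only [Finset.sum_apply]; exact hm)
  have hcompl : (P {ω | (Nr : ℝ) * ε ≤ (∑ i, X i) ω}ᶜ).toReal
      = 1 - (P {ω | (Nr : ℝ) * ε ≤ (∑ i, X i) ω}).toReal := by
    rw [measure_compl hBadMeas (measure_ne_top P _), measure_univ,
      ENNReal.toReal_sub_of_le prob_le_one (by norm_num)]
    simp
  have hmono : (P {ω | (Nr : ℝ) * ε ≤ (∑ i, X i) ω}ᶜ).toReal
      ≤ (P {ω | ‖uΘ - u‖ ≤ Real.sqrt 2 * C₁⁻¹ * Real.sqrt (Rk ω + ε + ‖B uΘ - g‖ ^ 2)}).toReal :=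
    ENNReal.toReal_le_toReal (measure_ne_top P _) (measure_ne_top P _) |>.mpr
      (measure_mono hdet) |>.trans_eq rfl
  calc 1 - Real.exp (-2 * Nr * ε ^ 2 / (τ₂ - τ₁) ^ 2)
      ≤ 1 - (P {ω | (Nr : ℝ) * ε ≤ (∑ i, X i) ω}).toReal := by linarith
    _ = (P {ω | (Nr : ℝ) * ε ≤ (∑ i, X i) ω}ᶜ).toReal := hcompl.symm
    _ ≤ _ := hmono
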